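/- Let D > 0, σ ≥ 0, c ∈ ℝ, u* > 0, and let F : ℝ → ℝ be continuous. Suppose u : ℝ → ℝ is twice continuously differentiable, satisfies D u''(x) + c u'(x) + F(u(x)) − σ u(x) = 0 for all x, is monotonically decreasing with u(x) → u* as x → −∞ and u(x) → 0 as x → +∞, u'(x) → 0 as x → ±∞, and u' is square-integrable on ℝ. Then c · ∫_ℝ (u'(x))² dx = ∫₀^{u*} F(s) ds − (σ/2)(u*)². -/

import Mathlib

open Filter MeasureTheory

/-- Integrating the traveling-wave equation
`D u'' + c u' + F(u) - σ u = 0` against `u'` over the whole line yields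
`c ∫ (u')² = ∫₀^{u*} F(s) ds - (σ/2) (u*)²`. -/
theorem stmt_9 (D σ c ustar : ℝ) (hD : 0 < D) (hσ : 0 ≤ σ) (hustar : 0 < ustar)
    (F : ℝ → ℝ) (hFcont : Continuous F)
    (u : ℝ → ℝ) (hu : ContDiff ℝ 2 u)
    (heq : ∀ x : ℝ, D * deriv (deriv u) x + c * deriv u x + F (u x) - σ * u x = 0)
    (hmono : Antitone u)
    (hbot : Tendsto u atBot (nhds ustar))
    (htop : Tendsto u atTop (nhds 0))
    (hdbot : Tendsto (deriv u) atBot (nhds 0))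
    (hdtop : Tendsto (deriv u) atTop (nhds 0))
    (hint : Integrable (fun x => (deriv u x) ^ 2)) :
    c * (∫ x : ℝ, (deriv u x) ^ 2) =
      (∫ s in (0 : ℝ)..ustar, F s) - σ / 2 * ustar ^ 2 := by
  set G : ℝ → ℝ := fun y => ∫ s in (0 : ℝ)..y, F s with hGdef
  have hGderiv : ∀ y : ℝ, HasDerivAt G (F y) y := fun y =>
    intervalIntegral.integral_hasDerivAt_right (hFcont.intervalIntegrable _ _)
      hFcont.stronglyMeasurable.stronglyMeasurableAtFilter hFcont.continuousAt
  have hGcont : Continuous G :=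
    continuous_iff_continuousAt.2 fun y => (hGderiv y).continuousAt
  -- derivatives of u
  have hud : Differentiable ℝ u := hu.differentiable two_ne_zero
  have hud' : Differentiable ℝ (deriv u) :=
    (hu.iterate_deriv' 1 1).differentiable one_ne_zero
  have hduc : Continuous (deriv u) := hud'.continuous
  -- the energy function
  set E : ℝ → ℝ := fun x => D / 2 * (deriv u x) ^ 2 + G (u x) - σ / 2 * (u x) ^ 2 with hEdef
  have hE : ∀ x : ℝ, HasDerivAt E (-c * (deriv u x) ^ 2) x := by
    intro x
    have h1 : HasDerivAt u (deriv u x) x := (hud x).hasDerivAt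
    have h2 : HasDerivAt (deriv u) (deriv (deriv u) x) x := (hud' x).hasDerivAt
    have hsq : HasDerivAt (fun x => (deriv u x) ^ 2)
        (2 * deriv u x ^ 1 * deriv (deriv u) x) x := h2.pow 2
    have hcomp : HasDerivAt (fun x => G (u x)) (F (u x) * deriv u x) x :=
      (hGderiv (u x)).comp x h1
    have husq : HasDerivAt (fun x => (u x) ^ 2) (2 * u x ^ 1 * deriv u x) x := h1.pow 2
    have := ((hsq.const_mul (D / 2)).add hcomp).sub (husq.const_mul (σ / 2))
    refine this.congr_deriv ?_
    linear_combination (deriv u x) * heq x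
  have hFTC : ∀ a b : ℝ, c * (∫ x in a..b, (deriv u x) ^ 2) = E a - E b := by
    intro a b
    have : (∫ x in a..b, -c * (deriv u x) ^ 2) = E b - E a :=
      intervalIntegral.integral_eq_sub_of_hasDerivAt (fun x _ => hE x)
        ((continuous_const.mul (hduc.pow 2)).intervalIntegrable a b)
    rw [intervalIntegral.integral_const_mul] at this
    linarith [this]
  -- limits of E
  have hG0 : G 0 = 0 := intervalIntegral.integral_same
  have hEbot : Tendsto E atBot (nhds (G ustar - σ / 2 * ustar ^ 2)) := by
    have : Tendsto E atBot
        (nhds (D / 2 * (0:ℝ) ^ 2 + G ustar - σ / 2 * ustar ^ 2)) := by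
      exact (((hdbot.pow 2).const_mul (D / 2)).add
        ((hGcont.tendsto ustar).comp hbot)).sub ((hbot.pow 2).const_mul (σ / 2))
    simpa using this
  have hEtop : Tendsto E atTop (nhds 0) := by
    have : Tendsto E atTop
        (nhds (D / 2 * (0:ℝ) ^ 2 + G 0 - σ / 2 * (0:ℝ) ^ 2)) := by
      exact (((hdtop.pow 2).const_mul (D / 2)).add
        ((hGcont.tendsto 0).comp htop)).sub ((htop.pow 2).const_mul (σ / 2))
    simpa [hG0] using this
  -- improper integral as a limit
  have hlim1 : Tendsto (fun r : ℝ => c * ∫ x in (-r)..r, (deriv u x) ^ 2) atTop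
      (nhds (c * ∫ x : ℝ, (deriv u x) ^ 2)) :=
    (intervalIntegral_tendsto_integral hint tendsto_neg_atTop_atBot tendsto_id).const_mul c
  have hlim2 : Tendsto (fun r : ℝ => c * ∫ x in (-r)..r, (deriv u x) ^ 2) atTop
      (nhds ((G ustar - σ / 2 * ustar ^ 2) - 0)) := by
    simp only [hFTC]
    exact (hEbot.comp tendsto_neg_atTop_atBot).sub (hEtop.comp tendsto_id)
  have := tendsto_nhds_unique hlim1 hlim2
  simpa [hGdef] using this
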